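/- arXiv:1209.5652 — 3 statements merged into one kernel-verified Lean document; each statement's English description precedes it below -/
import Mathlib

section
/- For every complex number x, the series x · Σ_{n=1}^∞ (μ(n) / n²) · exp(-x / n²), where μ is the Möbius function, converges absolutely, and its sum equals Riesz(x). -/
open Complex

private lemma moebius_hasSum (s : ℂ) (hs : 1 < s.re) :
    HasSum (fun n : ℕ => (ArithmeticFunction.moebius (n + 1) : ℂ) / ((n + 1 : ℕ) : ℂ) ^ s)
      (riemannZeta s)⁻¹ := by
  have hsum : LSeriesSummable (fun n : ℕ => ((ArithmeticFunction.moebius n : ℤ) : ℂ)) s :=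
    ArithmeticFunction.LSeriesSummable_moebius_iff.mpr hs
  have hmul := LSeries_one_mul_Lseries_moebius hs
  rw [LSeries_one_eq_riemannZeta hs] at hmul
  have hL : LSeries (fun n : ℕ => ((ArithmeticFunction.moebius n : ℤ) : ℂ)) s
      = (riemannZeta s)⁻¹ := (inv_eq_of_mul_eq_one_right hmul).symm
  have h0 : LSeries (fun n : ℕ => ((ArithmeticFunction.moebius n : ℤ) : ℂ)) s
      = ∑' n : ℕ, LSeries.term (fun n : ℕ => ((ArithmeticFunction.moebius n : ℤ) : ℂ)) s (n+1) := by
    rw [LSeries, Summable.tsum_eq_zero_add hsum, LSeries.term_zero, zero_add]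
  have hshift : Summable fun n : ℕ =>
      LSeries.term (fun n : ℕ => ((ArithmeticFunction.moebius n : ℤ) : ℂ)) s (n+1) :=
    (summable_nat_add_iff 1).mpr hsum
  have h := hshift.hasSum
  rw [← h0, hL] at h
  have heq : (fun n : ℕ =>
      LSeries.term (fun n : ℕ => ((ArithmeticFunction.moebius n : ℤ) : ℂ)) s (n+1))
      = fun n : ℕ => (ArithmeticFunction.moebius (n + 1) : ℂ) / ((n + 1 : ℕ) : ℂ) ^ s := by
    funext n
    rw [LSeries.term_of_ne_zero n.succ_ne_zero]
  rwa [heq] at h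

private lemma moebius_norm_le_one (m : ℕ) : ‖(ArithmeticFunction.moebius m : ℂ)‖ ≤ 1 := by
  by_cases h : Squarefree m
  · rw [ArithmeticFunction.moebius_apply_of_squarefree h]
    push_cast
    rw [norm_pow, norm_neg, norm_one, one_pow]
  · rw [ArithmeticFunction.moebius_eq_zero_of_not_squarefree h]
    simp

set_option maxHeartbeats 1600000 in
/-- For every complex number `x`, the series
`x · Σ_{n≥1} (μ(n)/n²) exp(-x/n²)` (with `μ` the Möbius function) converges absolutely and
its sum equals `Riesz(x) = Σ_{k≥1} (-1)^{k+1} x^k / ((k-1)! ζ(2k))` (written with the index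
shifted by one). -/
theorem riesz_eq_moebius_exp_series (x : ℂ) :
    (Summable fun n : ℕ =>
      ‖(ArithmeticFunction.moebius (n + 1) : ℂ) / ((n + 1 : ℕ) : ℂ) ^ 2 *
        Complex.exp (-x / ((n + 1 : ℕ) : ℂ) ^ 2)‖) ∧
    x * ∑' n : ℕ, (ArithmeticFunction.moebius (n + 1) : ℂ) / ((n + 1 : ℕ) : ℂ) ^ 2 *
        Complex.exp (-x / ((n + 1 : ℕ) : ℂ) ^ 2) =
      ∑' k : ℕ, (-1 : ℂ) ^ k * x ^ (k + 1) /
        ((Nat.factorial k : ℂ) * riemannZeta (2 * ((k : ℂ) + 1))) := by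
  have hNpos : ∀ n : ℕ, (0:ℝ) < ((n:ℝ)+1)^2 := fun n => by positivity
  have hN1 : ∀ n : ℕ, (1:ℝ) ≤ ((n:ℝ)+1)^2 := fun n => by nlinarith [Nat.cast_nonneg (α := ℝ) n]
  -- norm of exp factor
  have hexp : ∀ n : ℕ, ‖Complex.exp (-x / ((n + 1 : ℕ) : ℂ) ^ 2)‖ ≤ Real.exp ‖x‖ := by
    intro n
    rw [Complex.norm_exp]
    apply Real.exp_le_exp.mpr
    refine (Complex.re_le_norm _).trans ?_
    have habs : ‖-x / ((n + 1 : ℕ) : ℂ) ^ 2‖ = ‖x‖ / ((n:ℝ)+1)^2 := by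
      rw [norm_div, norm_neg, norm_pow, Complex.norm_natCast]
      push_cast
      ring_nf
    rw [habs, div_le_iff₀ (hNpos n)]
    nlinarith [hN1 n, norm_nonneg x]
  -- summability of 1/(n+1)^2
  have hb : Summable (fun n : ℕ => 1 / ((n:ℝ)+1)^2) := by
    have := (Real.summable_one_div_nat_pow (p := 2)).mpr one_lt_two
    have h2 := (summable_nat_add_iff 1).mpr this
    refine h2.congr fun n => ?_
    push_cast
    ring_nf
  -- Part 1
  have part1 : Summable fun n : ℕ =>
      ‖(ArithmeticFunction.moebius (n + 1) : ℂ) / ((n + 1 : ℕ) : ℂ) ^ 2 *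
        Complex.exp (-x / ((n + 1 : ℕ) : ℂ) ^ 2)‖ := by
    refine Summable.of_nonneg_of_le (fun n => norm_nonneg _)
      (fun n => ?_) (hb.mul_left (Real.exp ‖x‖))
    rw [norm_mul, norm_div, norm_pow]
    have h1 : ‖((n + 1 : ℕ) : ℂ)‖ = (n:ℝ)+1 := by
      rw [Complex.norm_natCast]; push_cast; ring
    rw [h1]
    calc ‖(ArithmeticFunction.moebius (n + 1) : ℂ)‖ / ((n:ℝ)+1)^2 *
          ‖Complex.exp (-x / ((n + 1 : ℕ) : ℂ) ^ 2)‖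
        ≤ 1 / ((n:ℝ)+1)^2 * Real.exp ‖x‖ := by
          apply mul_le_mul
          · gcongr
            exact moebius_norm_le_one _
          · exact hexp n
          · exact norm_nonneg _
          · positivity
      _ = Real.exp ‖x‖ * (1 / ((n:ℝ)+1)^2) := by ring
  refine ⟨part1, ?_⟩
  -- the double series
  set F : ℕ × ℕ → ℂ := fun p =>
    x * ((ArithmeticFunction.moebius (p.1 + 1) : ℂ) / ((p.1 + 1 : ℕ) : ℂ) ^ 2) *
      ((-x / ((p.1 + 1 : ℕ) : ℂ) ^ 2) ^ p.2 / (Nat.factorial p.2 : ℂ)) with hF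
  -- row sums (fixed n)
  have hrow : ∀ n : ℕ, HasSum (fun k => F (n, k))
      (x * ((ArithmeticFunction.moebius (n + 1) : ℂ) / ((n + 1 : ℕ) : ℂ) ^ 2 *
        Complex.exp (-x / ((n + 1 : ℕ) : ℂ) ^ 2))) := by
    intro n
    have he : HasSum (fun k : ℕ => (-x / ((n + 1 : ℕ) : ℂ) ^ 2) ^ k / (Nat.factorial k : ℂ))
        (Complex.exp (-x / ((n + 1 : ℕ) : ℂ) ^ 2)) := by
      rw [Complex.exp_eq_exp_ℂ]
      exact NormedSpace.expSeries_div_hasSum_exp _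
    have h2 := he.mul_left (x * ((ArithmeticFunction.moebius (n + 1) : ℂ) / ((n + 1 : ℕ) : ℂ) ^ 2))
    rw [mul_assoc] at h2
    exact h2
  -- column sums (fixed k)
  have hNne : ∀ n : ℕ, ((n + 1 : ℕ) : ℂ) ≠ 0 := fun n =>
    Nat.cast_ne_zero.mpr n.succ_ne_zero
  have hcol : ∀ k : ℕ, HasSum (fun n => F (n, k))
      ((-1 : ℂ) ^ k * x ^ (k + 1) /
        ((Nat.factorial k : ℂ) * riemannZeta (2 * ((k : ℂ) + 1)))) := by
    intro k
    have hsre : (1:ℝ) < (2 * ((k : ℂ) + 1)).re := by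
      have h2 : (2 * ((k:ℂ) + 1)) = ((2*(k+1) : ℕ) : ℂ) := by push_cast; ring
      rw [h2, Complex.natCast_re]
      exact_mod_cast (by omega : 1 < 2*(k+1))
    have hζ := riemannZeta_ne_zero_of_one_lt_re hsre
    have hm := (moebius_hasSum _ hsre).mul_left ((-1 : ℂ) ^ k * x ^ (k + 1) / (Nat.factorial k : ℂ))
    have hfac : (Nat.factorial k : ℂ) ≠ 0 := Nat.cast_ne_zero.mpr k.factorial_ne_zero
    have hval : (-1 : ℂ) ^ k * x ^ (k + 1) / (Nat.factorial k : ℂ) * (riemannZeta (2 * ((k : ℂ) + 1)))⁻¹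
        = (-1 : ℂ) ^ k * x ^ (k + 1) /
          ((Nat.factorial k : ℂ) * riemannZeta (2 * ((k : ℂ) + 1))) := by
      field_simp
    rw [hval] at hm
    refine hm.congr_fun fun n => ?_
    have hpow : ((n + 1 : ℕ) : ℂ) ^ (2 * ((k:ℂ) + 1)) = (((n + 1 : ℕ) : ℂ) ^ 2) ^ (k + 1) := by
      rw [show (2 * ((k:ℂ) + 1)) = ((2 * (k + 1) : ℕ) : ℂ) by push_cast; ring,
        Complex.cpow_natCast, pow_mul]
    simp only [hpow, hF]
    rw [div_pow, neg_pow]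
    have hN2 : (((n + 1 : ℕ) : ℂ) ^ 2) ≠ 0 := pow_ne_zero _ (hNne n)
    field_simp
    ring
  -- absolute summability of F
  have hFsumm : Summable fun p : ℕ × ℕ => ‖F p‖ := by
    have hg : Summable (fun k : ℕ => ‖x‖ ^ (k+1) / (Nat.factorial k : ℝ)) := by
      have := Real.summable_pow_div_factorial ‖x‖
      refine (this.mul_left ‖x‖).congr fun k => ?_
      rw [pow_succ]
      ring
    have hprod : Summable (fun p : ℕ × ℕ =>
        (1 / ((p.1:ℝ)+1)^2) * (‖x‖ ^ (p.2+1) / (Nat.factorial p.2 : ℝ))) :=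
      hb.mul_of_nonneg hg (fun n => by positivity) (fun k => by positivity)
    refine Summable.of_nonneg_of_le (fun p => norm_nonneg _) (fun p => ?_) hprod
    obtain ⟨n, k⟩ := p
    simp only [hF, norm_mul, norm_div, norm_pow, norm_neg]
    have h1 : ‖((n + 1 : ℕ) : ℂ)‖ = (n:ℝ)+1 := by
      rw [Complex.norm_natCast]; push_cast; ring
    rw [h1]
    have hfa : ‖((Nat.factorial k : ℕ) : ℂ)‖ = (Nat.factorial k : ℝ) := by
      rw [Complex.norm_natCast]
    rw [hfa]
    have hxk : (‖x‖ / ((n:ℝ)+1)^2) ^ k ≤ ‖x‖ ^ k := by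
      apply pow_le_pow_left₀ (by positivity)
      rw [div_le_iff₀ (hNpos n)]
      nlinarith [hN1 n, norm_nonneg x]
    calc ‖x‖ * (‖(ArithmeticFunction.moebius (n + 1) : ℂ)‖ / ((n:ℝ)+1)^2) *
          ((‖x‖ / ((n:ℝ)+1)^2) ^ k / (Nat.factorial k : ℝ))
        ≤ ‖x‖ * (1 / ((n:ℝ)+1)^2) * (‖x‖ ^ k / (Nat.factorial k : ℝ)) := by
          apply mul_le_mul
          · apply mul_le_mul_of_nonneg_left _ (norm_nonneg x)
            gcongr
            exact moebius_norm_le_one _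
          · exact div_le_div_of_nonneg_right hxk (by positivity)
          · positivity
          · positivity
      _ = (1 / ((n:ℝ)+1)^2) * (‖x‖ ^ (k+1) / (Nat.factorial k : ℝ)) := by
          rw [pow_succ]
          ring
  have hFs : Summable F := hFsumm.of_norm
  -- put it together
  calc x * ∑' n : ℕ, (ArithmeticFunction.moebius (n + 1) : ℂ) / ((n + 1 : ℕ) : ℂ) ^ 2 *
        Complex.exp (-x / ((n + 1 : ℕ) : ℂ) ^ 2)
      = ∑' n : ℕ, x * ((ArithmeticFunction.moebius (n + 1) : ℂ) / ((n + 1 : ℕ) : ℂ) ^ 2 *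
        Complex.exp (-x / ((n + 1 : ℕ) : ℂ) ^ 2)) := by rw [tsum_mul_left]
    _ = ∑' (n : ℕ) (k : ℕ), F (n, k) := by
        refine tsum_congr fun n => ((hrow n).tsum_eq).symm
    _ = ∑' p : ℕ × ℕ, F p := (Summable.tsum_prod hFs).symm
    _ = ∑' (k : ℕ) (n : ℕ), F (n, k) := by
        rw [Summable.tsum_prod hFs]
        exact (Summable.tsum_comm (f := fun n k => F (n, k)) hFs).symm
    _ = ∑' k : ℕ, (-1 : ℂ) ^ k * x ^ (k + 1) /
        ((Nat.factorial k : ℂ) * riemannZeta (2 * ((k : ℂ) + 1))) := by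
        refine tsum_congr fun k => (hcol k).tsum_eq
end

section
/- Let (a_n) be a sequence of complex numbers, and let σ be the abscissa of absolute convergence of the Dirichlet series f(s) = Σ_{n=1}^∞ a_n n^{-s} (i.e., the infimum of real s for which Σ |a_n| n^{-s} converges), and let c > max(σ, 0). Then for every real s with -1 < s < -σ/c, the Mellin transform of R_c exists and ∫_0^∞ R_c(x) x^{s-1} dx = f(-cs) · Γ(s+1). -/
open Complex MeasureTheory Set Filter
open scoped ENNReal NNReal

lemma aesm_tsum_of_summable {α E : Type*} {m : MeasurableSpace α} {μ : Measure α}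
    [NormedAddCommGroup E] {F : ℕ → α → E}
    (hF : ∀ n, AEStronglyMeasurable (F n) μ)
    (hs : ∀ᵐ t ∂μ, Summable fun n => F n t) :
    AEStronglyMeasurable (fun t => ∑' n, F n t) μ := by
  refine aestronglyMeasurable_of_tendsto_ae atTop
    (fun m => Finset.aestronglyMeasurable_sum (Finset.range m) (fun i _ => hF i)) ?_
  filter_upwards [hs] with t ht
  simpa only [Finset.sum_apply] using ht.hasSum.tendsto_sum_nat

lemma integrable_tsum_of_norm {α : Type*} {m : MeasurableSpace α} {μ : Measure α}
    {F : ℕ → α → ℂ}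
    (hF : ∀ n, Integrable (F n) μ)
    (hs : ∀ᵐ t ∂μ, Summable fun n => ‖F n t‖)
    (hnorm : Summable fun n => ∫ t, ‖F n t‖ ∂μ) :
    Integrable (fun t => ∑' n, F n t) μ := by
  have hmeas := aesm_tsum_of_summable (fun n => (hF n).1)
    (hs.mono fun t ht => ht.of_norm)
  refine ⟨hmeas, ?_⟩
  have h1 : ∫⁻ t, ‖∑' n, F n t‖₊ ∂μ ≤ ∑' n, ∫⁻ t, ‖F n t‖₊ ∂μ := by
    rw [← MeasureTheory.lintegral_tsum fun n => (hF n).1.nnnorm.aemeasurable.coe_nnreal_ennreal]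
    refine lintegral_mono_ae ?_
    filter_upwards [hs] with t ht
    calc (‖∑' n, F n t‖₊ : ℝ≥0∞) = ENNReal.ofReal ‖∑' n, F n t‖ :=
          (ofReal_norm _).symm
      _ ≤ ENNReal.ofReal (∑' n, ‖F n t‖) :=
          ENNReal.ofReal_le_ofReal (norm_tsum_le_tsum_norm ht)
      _ = ∑' n, ENNReal.ofReal ‖F n t‖ :=
          ENNReal.ofReal_tsum_of_nonneg (fun n => norm_nonneg _) ht
      _ = ∑' n, (‖F n t‖₊ : ℝ≥0∞) := tsum_congr fun n => ofReal_norm _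
  have h2 : ∑' n, ∫⁻ t, ‖F n t‖₊ ∂μ = ENNReal.ofReal (∑' n, ∫ t, ‖F n t‖ ∂μ) := by
    rw [ENNReal.ofReal_tsum_of_nonneg (fun n => integral_nonneg fun t => norm_nonneg _) hnorm]
    refine tsum_congr fun n => ?_
    rw [MeasureTheory.ofReal_integral_eq_lintegral_ofReal (hF n).norm
      (ae_of_all _ fun t => norm_nonneg _)]
    exact lintegral_congr fun x => (ofReal_norm _).symm
  have : HasFiniteIntegral (fun t => ∑' n, F n t) μ :=
    lt_of_le_of_lt (h1.trans h2.le) ENNReal.ofReal_lt_top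
  exact this

lemma hasSum_cexp (z : ℂ) : HasSum (fun k : ℕ => z ^ k / (Nat.factorial k : ℂ)) (Complex.exp z) := by
  rw [Complex.exp_eq_exp_ℂ, NormedSpace.exp_eq_tsum_div]
  exact (NormedSpace.expSeries_div_summable z).hasSum

lemma hasSum_rexp (x : ℝ) : HasSum (fun k : ℕ => x ^ k / (Nat.factorial k : ℝ)) (Real.exp x) := by
  rw [Real.exp_eq_exp_ℝ, NormedSpace.exp_eq_tsum_div]
  exact (NormedSpace.expSeries_div_summable x).hasSum

lemma integrableOn_cpow_mul_exp {s : ℂ} (hs : 0 < s.re) {P : ℝ} (hP : 0 < P) (A : ℂ) :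
    IntegrableOn (fun t : ℝ => (t : ℂ) ^ (s - 1) * (A * Real.exp (-P * t))) (Ioi 0) := by
  simp_rw [← mul_assoc, mul_comm _ A, mul_assoc]
  have := Complex.GammaIntegral_convergent hs
  rw [← mul_zero P, ← integrableOn_Ioi_comp_mul_left_iff _ _ hP] at this
  refine (IntegrableOn.congr_fun (this.const_mul (1 / (P : ℂ) ^ (s - 1)))
    (fun t (ht : 0 < t) => ?_) measurableSet_Ioi).const_mul _
  simp_rw [mul_comm (↑(Real.exp _) : ℂ), ← mul_assoc, neg_mul, ofReal_mul]
  rw [mul_cpow_ofReal_nonneg hP.le ht.le, ← mul_assoc, one_div, inv_mul_cancel₀, one_mul]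
  rw [Ne, cpow_eq_zero_iff, not_and_or]
  exact Or.inl (ofReal_ne_zero.mpr hP.ne')


set_option maxHeartbeats 2000000 in

/-- Let `σ` be the abscissa of absolute convergence of the Dirichlet series
`f(s) = Σ_{n≥1} aₙ n^{-s}` (the infimum of the real `t` for which `Σ |aₙ| n^{-t}` converges),
and let `c > max(σ, 0)`.  Then for every real `s` with `-1 < s < -σ/c`, the Mellin transform
of `R_c` exists and `∫_0^∞ R_c(x) x^{s-1} dx = f(-cs) Γ(s+1)`, where
`R_c(x) = Σ_{k≥1} (-1)^{k+1} f(ck) x^k/(k-1)!` (reindexed by `k ↦ k + 1`). -/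
theorem riesz_general_mellin
    (a : ℕ → ℂ) (σ : ℝ)
    (hσ : σ = sInf {t : ℝ | Summable fun n : ℕ => ‖a (n + 1)‖ / ((n : ℝ) + 1) ^ t})
    (hconv : ∀ s : ℂ, σ < s.re →
      Summable fun n : ℕ => ‖a (n + 1) / ((n + 1 : ℕ) : ℂ) ^ s‖)
    (f : ℂ → ℂ)
    (hf : ∀ s : ℂ, σ < s.re → f s = ∑' n : ℕ, a (n + 1) / ((n + 1 : ℕ) : ℂ) ^ s)
    (c : ℝ) (hc : max σ 0 < c)
    (s : ℝ) (hs₁ : -1 < s) (hs₂ : s < -σ / c) :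
    IntegrableOn
      (fun x : ℝ =>
        (∑' k : ℕ,
            (-1 : ℂ) ^ k * f ((c * (k + 1) : ℝ) : ℂ) * (x : ℂ) ^ (k + 1) /
              (Nat.factorial k : ℂ)) * ((x ^ (s - 1) : ℝ) : ℂ))
      (Ioi (0 : ℝ)) ∧
    (∫ x : ℝ in Ioi (0 : ℝ),
        (∑' k : ℕ,
            (-1 : ℂ) ^ k * f ((c * (k + 1) : ℝ) : ℂ) * (x : ℂ) ^ (k + 1) /
              (Nat.factorial k : ℂ)) * ((x ^ (s - 1) : ℝ) : ℂ)) =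
      f ((-(c * s) : ℝ) : ℂ) * Complex.Gamma ((s : ℂ) + 1) := by
  have hσc : σ < c := lt_of_le_of_lt (le_max_left _ _) hc
  have hc0 : (0:ℝ) < c := lt_of_le_of_lt (le_max_right _ _) hc
  have hcs : σ < -(c * s) := by
    have h := (lt_div_iff₀ hc0).mp hs₂
    nlinarith
  set N : ℕ → ℝ := fun n => (n : ℝ) + 1 with hN
  have hN0 : ∀ n, 0 < N n := fun n => by positivity
  have hN1 : ∀ n, 1 ≤ N n := fun n => by simp [hN]
  have hNcast : ∀ n : ℕ, ((n + 1 : ℕ) : ℝ) = N n := fun n => by push_cast [hN]; ring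
  set p : ℕ → ℝ := fun n => N n ^ (-c) with hp
  have hp0 : ∀ n, 0 < p n := fun n => Real.rpow_pos_of_pos (hN0 n) _
  have hp1 : ∀ n, p n ≤ 1 := fun n =>
    Real.rpow_le_one_of_one_le_of_nonpos (hN1 n) (by linarith)
  have hA : ∀ t : ℝ, σ < t → Summable fun n => ‖a (n + 1)‖ * N n ^ (-t) := by
    intro t ht
    have h := hconv (t : ℂ) (by simpa using ht)
    refine h.congr fun n => ?_
    rw [norm_div, Complex.norm_natCast_cpow_of_pos (Nat.succ_pos n), ofReal_re, hNcast n,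
      Real.rpow_neg (hN0 n).le, div_eq_mul_inv]
  set a' : ℕ → ℂ := fun n => a (n + 1) * (p n : ℂ) with ha'
  have hexple : ∀ n, ∀ t : ℝ, 0 < t → Real.exp (-(p n * t)) ≤ 1 := by
    intro n t ht
    rw [Real.exp_le_one_iff]
    nlinarith [hp0 n]
  have hnorm_a' : ∀ n, ‖a' n‖ = ‖a (n + 1)‖ * p n := by
    intro n
    rw [ha', norm_mul, Complex.norm_real, Real.norm_eq_abs, abs_of_pos (hp0 n)]
  have hsumF : ∀ t : ℝ, 0 < t → Summable fun n => a' n * ((Real.exp (-p n * t) : ℝ) : ℂ) := by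
    intro t ht
    refine Summable.of_norm (Summable.of_nonneg_of_le (fun n => norm_nonneg _)
      (fun n => ?_) (hA c hσc))
    rw [norm_mul, hnorm_a', Complex.norm_real, Real.norm_eq_abs, Real.abs_exp, neg_mul]
    have h1 := hexple n t ht
    have h2 := Real.exp_pos (-(p n * t))
    have : ‖a (n + 1)‖ * N n ^ (-c) = ‖a (n + 1)‖ * p n := rfl
    rw [this]
    exact mul_le_of_le_one_right (by positivity) h1
  set F : ℝ → ℂ := fun t => ∑' n, a' n * ((Real.exp (-p n * t) : ℝ) : ℂ) with hFdef
  -- pointwise identity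
  have hKey : ∀ t : ℝ, 0 < t →
      (∑' k : ℕ, (-1 : ℂ) ^ k * f ((c * (k + 1) : ℝ) : ℂ) * (t : ℂ) ^ (k + 1) /
        (Nat.factorial k : ℂ)) = (t : ℂ) * F t := by
    intro t ht
    set q : ℕ → ℝ := fun n => p n * t with hq
    have hq0 : ∀ n, 0 < q n := fun n => mul_pos (hp0 n) ht
    set w : ℕ → ℕ → ℂ := fun n k =>
      a (n + 1) * ((-(q n) : ℝ) : ℂ) ^ k * ((q n : ℝ) : ℂ) / (Nat.factorial k : ℂ) with hw
    have hwnorm : ∀ n k, ‖w n k‖ = ‖a (n + 1)‖ * (q n ^ k / (Nat.factorial k : ℝ)) * q n := by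
      intro n k
      rw [hw]
      simp only [norm_div, norm_mul, norm_pow, Complex.norm_real, Real.norm_eq_abs, abs_neg,
        Complex.norm_natCast, abs_of_pos (hq0 n)]
      ring
    have hg : Summable fun nk : ℕ × ℕ =>
        ‖a (nk.1 + 1)‖ * (q nk.1 ^ nk.2 / (Nat.factorial nk.2 : ℝ)) * q nk.1 := by
      rw [summable_prod_of_nonneg (fun nk => by positivity)]
      constructor
      · intro n
        simpa using (((Real.summable_pow_div_factorial (q n)).mul_left
          ‖a (n + 1)‖).mul_right (q n))
      · refine Summable.of_nonneg_of_le (fun n => tsum_nonneg fun k => by positivity)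
          (fun n => ?_) ((hA c hσc).mul_right (t * Real.exp t))
        have hts : ∑' k, ‖a (n + 1)‖ * (q n ^ k / (Nat.factorial k : ℝ)) * q n
            = ‖a (n + 1)‖ * Real.exp (q n) * q n := by
          rw [tsum_mul_right, tsum_mul_left, (hasSum_rexp (q n)).tsum_eq]
        rw [hts]
        have h1 : q n ≤ t := mul_le_of_le_one_left ht.le (hp1 n)
        have h2 : Real.exp (q n) ≤ Real.exp t := Real.exp_le_exp.mpr h1
        have h3 : ‖a (n + 1)‖ * N n ^ (-c) = ‖a (n + 1)‖ * p n := rfl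
        rw [h3]
        have hmm := mul_le_mul_of_nonneg_left h2
          (mul_nonneg (mul_nonneg (norm_nonneg (a (n + 1))) (hp0 n).le) ht.le)
        have hqq : q n = p n * t := rfl
        calc ‖a (n + 1)‖ * Real.exp (q n) * q n
            = ‖a (n + 1)‖ * p n * t * Real.exp (q n) := by rw [hqq]; ring
          _ ≤ ‖a (n + 1)‖ * p n * t * Real.exp t := hmm
          _ = ‖a (n + 1)‖ * p n * (t * Real.exp t) := by ring
    have hwsum : Summable (Function.uncurry w) := by
      refine Summable.of_norm (hg.congr fun nk => ?_)
      exact (hwnorm nk.1 nk.2).symm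
    have hterm : ∀ k : ℕ, (-1 : ℂ) ^ k * f ((c * (k + 1) : ℝ) : ℂ) * (t : ℂ) ^ (k + 1) /
        (Nat.factorial k : ℂ) = ∑' n, w n k := by
      intro k
      have hck : σ < ((c * (k + 1) : ℝ) : ℂ).re := by
        rw [ofReal_re]
        have : (0:ℝ) ≤ k := Nat.cast_nonneg k
        nlinarith
      rw [hf _ hck, ← tsum_mul_left, ← tsum_mul_right, ← tsum_div_const]
      refine tsum_congr fun n => ?_
      simp only [hw]
      have hB0 : (0:ℝ) < N n ^ c := Real.rpow_pos_of_pos (hN0 n) _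
      have hbase : ((n + 1 : ℕ) : ℂ) ^ ((c * (k + 1) : ℝ) : ℂ)
          = (((N n ^ c) ^ (k + 1) : ℝ) : ℂ) := by
        have h1 : ((n + 1 : ℕ) : ℂ) = ((N n : ℝ) : ℂ) := by
          rw [← hNcast n]; push_cast; ring
        rw [h1, ← Complex.ofReal_cpow (hN0 n).le]
        congr 1
        rw [← Real.rpow_natCast (N n ^ c) (k + 1), ← Real.rpow_mul (hN0 n).le]
        congr 1
        push_cast; ring
      rw [hbase]
      have hqn : ((q n : ℝ) : ℂ) = ((t : ℝ) : ℂ) / ((N n ^ c : ℝ) : ℂ) := by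
        simp only [hq, hp]
        rw [Real.rpow_neg (hN0 n).le]
        push_cast
        field_simp
      have hnq : ((-(q n) : ℝ) : ℂ) = -(((t : ℝ) : ℂ) / ((N n ^ c : ℝ) : ℂ)) := by
        rw [← hqn]; push_cast; ring
      rw [hqn, hnq]
      have hBC : ((N n ^ c : ℝ) : ℂ) ≠ 0 := by
        simp only [ne_eq, ofReal_eq_zero]
        exact hB0.ne'
      have hk : ((Nat.factorial k : ℕ) : ℂ) ≠ 0 := by
        exact_mod_cast (Nat.factorial_pos k).ne'
      push_cast
      field_simp
      rw [neg_pow (_ / _ : ℂ), div_pow]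
      field_simp
      ring
    calc (∑' k : ℕ, (-1 : ℂ) ^ k * f ((c * (k + 1) : ℝ) : ℂ) * (t : ℂ) ^ (k + 1) /
        (Nat.factorial k : ℂ))
        = ∑' k, ∑' n, w n k := tsum_congr hterm
      _ = ∑' n, ∑' k, w n k := Summable.tsum_comm hwsum
      _ = ∑' n, (a (n + 1) * ((q n : ℝ) : ℂ)) * Complex.exp (((-(q n) : ℝ) : ℂ)) := by
          refine tsum_congr fun n => ?_
          have h1 : ∀ k : ℕ, w n k
              = (a (n + 1) * ((q n : ℝ) : ℂ)) * (((-(q n) : ℝ) : ℂ) ^ k / (Nat.factorial k : ℂ)) := by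
            intro k; simp only [hw]; ring
          rw [tsum_congr h1, tsum_mul_left, (hasSum_cexp (((-(q n) : ℝ) : ℂ))).tsum_eq]
      _ = (t : ℂ) * F t := by
          simp only [hFdef]
          rw [← tsum_mul_left]
          refine tsum_congr fun n => ?_
          rw [← Complex.ofReal_exp]
          simp only [hq, ha']
          push_cast
          ring
  -- mellin machinery
  have hs1 : (0:ℝ) < s + 1 := by linarith
  have hs1c : 0 < ((s:ℂ) + 1).re := by simpa using hs1
  have hrpow_key : ∀ n, p n / p n ^ (s + 1) = N n ^ (c * s) := by
    intro n
    rw [hp, ← Real.rpow_mul (hN0 n).le, ← Real.rpow_sub (hN0 n)]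
    congr 1; ring
  have h_sum_mellin : Summable fun n => ‖a' n‖ / p n ^ ((s:ℂ) + 1).re := by
    have hre : ((s:ℂ) + 1).re = s + 1 := by simp
    refine Summable.congr (hA _ hcs) fun n => ?_
    rw [hre, hnorm_a', mul_div_assoc, hrpow_key n, neg_neg]
  have hF_hasSum : ∀ t ∈ Ioi (0:ℝ), HasSum (fun n => a' n * ((Real.exp (-p n * t) : ℝ) : ℂ)) (F t) :=
    fun t ht => (hsumF t ht).hasSum
  have hMel := hasSum_mellin (fun n => Or.inr (hp0 n)) hs1c hF_hasSum h_sum_mellin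
  -- equality of integrands on Ioi 0
  have hEqI : ∀ t ∈ Ioi (0:ℝ),
      (∑' k : ℕ, (-1 : ℂ) ^ k * f ((c * (k + 1) : ℝ) : ℂ) * (t : ℂ) ^ (k + 1) /
        (Nat.factorial k : ℂ)) * ((t ^ (s - 1) : ℝ) : ℂ)
      = (t : ℂ) ^ ((s:ℂ) + 1 - 1) • F t := by
    intro t ht
    rw [hKey t ht, smul_eq_mul]
    have h1 : ((s:ℂ) + 1 - 1) = ((s : ℝ) : ℂ) := by ring
    rw [h1, ← Complex.ofReal_cpow (le_of_lt ht)]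
    have h2 : (t:ℝ) ^ s = t * t ^ (s - 1) := by
      rw [show s = 1 + (s - 1) by ring, Real.rpow_add ht, Real.rpow_one]
      ring_nf
    rw [h2]
    push_cast
    ring
  -- integrability
  set H : ℕ → ℝ → ℂ :=
    fun n t => (t : ℂ) ^ ((s:ℂ) + 1 - 1) * (a' n * ((Real.exp (-p n * t) : ℝ) : ℂ)) with hH
  have hHint : ∀ n, IntegrableOn (H n) (Ioi (0:ℝ)) := fun n =>
    integrableOn_cpow_mul_exp hs1c (hp0 n) (a' n)
  have hHnorm : ∀ n, ∀ t : ℝ, 0 < t →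
      ‖H n t‖ = (‖a (n + 1)‖ * p n) * (t ^ (s + 1 - 1) * Real.exp (-(p n * t))) := by
    intro n t ht
    simp only [hH]
    rw [norm_mul, norm_mul, Complex.norm_real, Real.norm_eq_abs, Real.abs_exp,
      Complex.norm_cpow_eq_rpow_re_of_pos ht, hnorm_a']
    have : ((s:ℂ) + 1 - 1).re = s + 1 - 1 := by simp
    rw [this, neg_mul]
    ring
  have hae : ∀ᵐ t ∂(volume.restrict (Ioi (0:ℝ))), Summable fun n => ‖H n t‖ := by
    rw [ae_restrict_iff' measurableSet_Ioi]
    refine ae_of_all _ fun t ht => ?_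
    refine Summable.of_nonneg_of_le (fun n => norm_nonneg _) (fun n => ?_)
      ((hA c hσc).mul_right (t ^ (s + 1 - 1)))
    rw [hHnorm n t ht]
    have h1 := hexple n t ht
    have h2 := Real.exp_pos (-(p n * t))
    have h3 : (0:ℝ) ≤ t ^ (s + 1 - 1) := Real.rpow_nonneg (le_of_lt ht) _
    have h4 : ‖a (n + 1)‖ * N n ^ (-c) = ‖a (n + 1)‖ * p n := rfl
    rw [h4]
    calc (‖a (n + 1)‖ * p n) * (t ^ (s + 1 - 1) * Real.exp (-(p n * t)))
        = (‖a (n + 1)‖ * p n * t ^ (s + 1 - 1)) * Real.exp (-(p n * t)) := by ring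
      _ ≤ ‖a (n + 1)‖ * p n * t ^ (s + 1 - 1) := mul_le_of_le_one_right
          (mul_nonneg (mul_nonneg (norm_nonneg _) (hp0 n).le) h3) h1
  have hnormint : ∀ n, (∫ t in Ioi (0:ℝ), ‖H n t‖)
      = (‖a (n + 1)‖ * p n) * ((1 / p n) ^ (s + 1) * Real.Gamma (s + 1)) := by
    intro n
    rw [← Real.integral_rpow_mul_exp_neg_mul_Ioi hs1 (hp0 n), ← MeasureTheory.integral_const_mul]
    refine setIntegral_congr_fun measurableSet_Ioi fun t ht => ?_
    rw [hHnorm n t ht]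
  have hnormsum : Summable fun n => ∫ t in Ioi (0:ℝ), ‖H n t‖ := by
    refine Summable.congr ((hA _ hcs).mul_right (Real.Gamma (s + 1))) fun n => ?_
    rw [hnormint n, one_div, Real.inv_rpow (hp0 n).le, neg_neg, ← hrpow_key n,
      div_eq_mul_inv]
    ring
  have hGint : IntegrableOn (fun t => ∑' n, H n t) (Ioi (0:ℝ)) :=
    integrable_tsum_of_norm hHint hae hnormsum
  have hEqH : ∀ t ∈ Ioi (0:ℝ), (∑' n, H n t)
      = (∑' k : ℕ, (-1 : ℂ) ^ k * f ((c * (k + 1) : ℝ) : ℂ) * (t : ℂ) ^ (k + 1) /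
        (Nat.factorial k : ℂ)) * ((t ^ (s - 1) : ℝ) : ℂ) := by
    intro t ht
    rw [hEqI t ht, smul_eq_mul]
    simp only [hH, hFdef]
    exact tsum_mul_left
  constructor
  · exact hGint.congr_fun hEqH measurableSet_Ioi
  · have hval : (∫ x : ℝ in Ioi (0 : ℝ),
        (∑' k : ℕ, (-1 : ℂ) ^ k * f ((c * (k + 1) : ℝ) : ℂ) * (x : ℂ) ^ (k + 1) /
          (Nat.factorial k : ℂ)) * ((x ^ (s - 1) : ℝ) : ℂ)) = mellin F ((s:ℂ) + 1) := by
      rw [mellin]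
      exact setIntegral_congr_fun measurableSet_Ioi fun t ht => hEqI t ht
    rw [hval, ← hMel.tsum_eq, hf _ (by simpa using hcs), ← tsum_mul_right]
    refine tsum_congr fun n => ?_
    -- Γ(s+1) * a' n / pₙ^(s+1) = (a(n+1)/((n+1:ℕ):ℂ)^(-(c*s))) * Γ(s+1)
    have hofs : ((s:ℂ) + 1) = ((s + 1 : ℝ) : ℂ) := by push_cast; ring
    have h1 : ((p n : ℝ) : ℂ) ^ ((s:ℂ) + 1) = ((p n ^ (s + 1) : ℝ) : ℂ) := by
      rw [hofs, ← Complex.ofReal_cpow (hp0 n).le]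
    have h2 : ((n + 1 : ℕ) : ℂ) ^ ((-(c * s) : ℝ) : ℂ) = ((N n ^ (-(c * s)) : ℝ) : ℂ) := by
      have hcast : ((n + 1 : ℕ) : ℂ) = ((N n : ℝ) : ℂ) := by rw [← hNcast n]; push_cast; ring
      rw [hcast, ← Complex.ofReal_cpow (hN0 n).le]
    rw [h1, h2]
    simp only [ha']
    have h3 : (0:ℝ) < p n ^ (s + 1) := Real.rpow_pos_of_pos (hp0 n) _
    have h4 : (0:ℝ) < N n ^ (-(c * s)) := Real.rpow_pos_of_pos (hN0 n) _
    have h9 : ((p n : ℝ) : ℂ) * ((N n ^ (-(c * s)) : ℝ) : ℂ) = ((p n ^ (s + 1) : ℝ) : ℂ) := by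
      rw [← ofReal_mul]
      norm_cast
      have hkey : p n * N n ^ (-(c * s))
          = (p n / p n ^ (s + 1)) * N n ^ (-(c * s)) * p n ^ (s + 1) := by
        field_simp
      rw [hkey, hrpow_key n, ← Real.rpow_add (hN0 n)]
      norm_num
    have hP : ((p n ^ (s + 1) : ℝ) : ℂ) ≠ 0 := ofReal_ne_zero.mpr h3.ne'
    have hNc : ((N n ^ (-(c * s)) : ℝ) : ℂ) ≠ 0 := ofReal_ne_zero.mpr h4.ne'
    field_simp
    rw [mul_comm s c, eq_div_iff hNc]
    linear_combination Complex.Gamma ((s:ℂ) + 1) * a (n + 1) * h9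
end

section
/- Let ρ be a nontrivial zero of the Riemann zeta function that is simple (ζ(ρ) = 0, 0 < Re(ρ) < 1, ζ'(ρ) ≠ 0), and let x > 0 be real. Then the function s ↦ x^{-s} π^{s+1} / (sin(πs) · κ(-2s)) has a simple pole at s = -ρ/2 with residue π·csc(πρ/2) / (2 κ'(ρ)) · (x/π)^{ρ/2}, and this residue equals Γ(1 - ρ/2) / (2 ζ'(ρ)) · x^{ρ/2}; equivalently, lim_{s → -ρ/2} (s + ρ/2) · x^{-s} π^{s+1} / (sin(πs) · κ(-2s)) = Γ(1 - ρ/2) · x^{ρ/2} / (2 ζ'(ρ)). -/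
open Complex Real Topology Filter

/-- Let `ρ` be a simple nontrivial zero of the Riemann zeta function and
let `x > 0` be real.  Then the function `s ↦ x^{-s} π^{s+1} / (sin(πs) κ(-2s))` (where `κ` is
the completed zeta function `Γ(s/2) π^{-s/2} ζ(s)`, analytically continued, i.e. Mathlib's
`completedRiemannZeta`) has a simple pole at `s = -ρ/2` with residue
`π csc(πρ/2) / (2 κ'(ρ)) · (x/π)^{ρ/2}`, and this residue equals
`Γ(1 - ρ/2) x^{ρ/2} / (2 ζ'(ρ))`. -/
theorem residue_at_neg_half_zero (ρ : ℂ) (hζρ : riemannZeta ρ = 0)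
    (hρ₁ : 0 < ρ.re) (hρ₂ : ρ.re < 1) (hsimple : deriv riemannZeta ρ ≠ 0)
    (x : ℝ) (hx : 0 < x) :
    Tendsto
      (fun s : ℂ => (s + ρ / 2) *
        ((x : ℂ) ^ (-s) * (π : ℂ) ^ (s + 1) /
          (Complex.sin ((π : ℂ) * s) * completedRiemannZeta (-2 * s))))
      (𝓝[≠] (-ρ / 2))
      (𝓝 ((π : ℂ) / Complex.sin ((π : ℂ) * ρ / 2) / (2 * deriv completedRiemannZeta ρ) *
        ((x : ℂ) / (π : ℂ)) ^ (ρ / 2))) ∧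
    (π : ℂ) / Complex.sin ((π : ℂ) * ρ / 2) / (2 * deriv completedRiemannZeta ρ) *
        ((x : ℂ) / (π : ℂ)) ^ (ρ / 2) =
      Complex.Gamma (1 - ρ / 2) / (2 * deriv riemannZeta ρ) * (x : ℂ) ^ (ρ / 2) := by
  have hρ0 : ρ ≠ 0 := fun h => by simp [h] at hρ₁
  have hρ1 : ρ ≠ 1 := fun h => by simp [h] at hρ₂
  have hπ0 : (π : ℂ) ≠ 0 := ofReal_ne_zero.mpr Real.pi_ne_zero
  have hx0 : (x : ℂ) ≠ 0 := ofReal_ne_zero.mpr hx.ne'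
  have hargπ : Complex.arg (π : ℂ) ≠ π := by
    rw [Complex.arg_ofReal_of_nonneg Real.pi_pos.le]
    exact Real.pi_ne_zero.symm
  have hπρ : ((x : ℂ) / (π : ℂ)) ^ (ρ / 2) = (x : ℂ) ^ (ρ / 2) * ((π : ℂ) ^ (ρ / 2))⁻¹ := by
    rw [div_eq_mul_inv, ← ofReal_inv,
      mul_cpow_ofReal_nonneg hx.le (by positivity : (0:ℝ) ≤ π⁻¹), ofReal_inv,
      inv_cpow _ _ hargπ]
  have hπρ2 : ((π : ℂ) ^ (ρ / 2)) ≠ 0 := fun h => hπ0 (cpow_eq_zero_iff _ _ |>.mp h).1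
  -- Γℝ ρ ≠ 0
  have hGρ : Gammaℝ ρ ≠ 0 := Gammaℝ_ne_zero_of_re_pos hρ₁
  -- κ ρ = 0
  have hκρ : completedRiemannZeta ρ = 0 := by
    have := riemannZeta_def_of_ne_zero hρ0
    rw [hζρ] at this
    field_simp at this
    exact this.symm.trans (zero_mul _)
  -- Gamma (ρ/2) ≠ 0
  have hΓρ2 : Complex.Gamma (ρ / 2) ≠ 0 := by
    apply Complex.Gamma_ne_zero
    intro n h
    have : (ρ / 2).re = (-(n : ℂ)).re := by rw [h]
    simp only [div_ofNat_re, neg_re, natCast_re] at this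
    have hn : (0 : ℝ) ≤ (n : ℝ) := n.cast_nonneg
    linarith [this, hρ₁]
  -- sin (π ρ / 2) ≠ 0
  have hsin : Complex.sin ((π : ℂ) * ρ / 2) ≠ 0 := by
    rw [Complex.sin_ne_zero_iff]
    intro k h
    have : ((π : ℂ) * ρ / 2).re = ((k : ℂ) * π).re := by rw [h]
    simp only [div_ofNat_re, mul_re, ofReal_re, ofReal_im, intCast_re, intCast_im] at this
    have hre : ρ.re = 2 * (k : ℝ) := by
      field_simp at this
      nlinarith [Real.pi_pos, this]
    rcases le_or_gt (k : ℝ) 0 with hk | hk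
    · nlinarith
    · have : (1 : ℝ) ≤ (k : ℝ) := by exact_mod_cast hk
      nlinarith
  -- κ agrees with Γℝ * ζ near ρ
  have heq : completedRiemannZeta =ᶠ[𝓝 ρ] fun s => Gammaℝ s * riemannZeta s := by
    have hopen : ∀ᶠ s in 𝓝 ρ, s ≠ 0 ∧ Gammaℝ s ≠ 0 := by
      have h1 : ∀ᶠ s in 𝓝 ρ, s ≠ 0 := eventually_ne_nhds hρ0
      have h2 : ∀ᶠ s in 𝓝 ρ, Gammaℝ s ≠ 0 := by
        have : ∀ᶠ s in 𝓝 ρ, 0 < s.re :=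
          Complex.continuous_re.continuousAt.eventually (eventually_gt_nhds hρ₁)
        exact this.mono fun s hs => Gammaℝ_ne_zero_of_re_pos hs
      exact h1.and h2
    filter_upwards [hopen] with s ⟨hs0, hsG⟩
    rw [riemannZeta_def_of_ne_zero hs0]
    field_simp
  -- differentiability
  have hGdiff : DifferentiableAt ℂ Gammaℝ ρ := by
    apply DifferentiableAt.mul
    · exact (differentiableAt_id.neg.div_const 2).const_cpow (Or.inl hπ0)
    · have hg : DifferentiableAt ℂ Complex.Gamma (ρ / 2) := by
        apply Complex.differentiableAt_Gamma
        intro n h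
        have : (ρ / 2).re = (-(n : ℂ)).re := by rw [h]
        simp only [div_ofNat_re, neg_re, natCast_re] at this
        have hn : (0 : ℝ) ≤ (n : ℝ) := n.cast_nonneg
        linarith
      exact hg.comp ρ (differentiableAt_id.div_const 2)
  have hζdiff : DifferentiableAt ℂ riemannZeta ρ := differentiableAt_riemannZeta hρ1
  -- derivative of κ at ρ
  have hκ' : deriv completedRiemannZeta ρ = Gammaℝ ρ * deriv riemannZeta ρ := by
    rw [heq.deriv_eq, deriv_fun_mul hGdiff hζdiff, hζρ, mul_zero, zero_add]
  have hκ'0 : deriv completedRiemannZeta ρ ≠ 0 := by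
    rw [hκ']; exact mul_ne_zero hGρ hsimple
  set κ' := deriv completedRiemannZeta ρ with hκ'def
  -- the limit of (s + ρ/2) / κ(-2s)
  have hderiv : HasDerivAt completedRiemannZeta κ' ρ :=
    (differentiableAt_completedZeta hρ0 hρ1).hasDerivAt
  have hslope : Tendsto (fun t => (completedRiemannZeta t - completedRiemannZeta ρ) / (t - ρ))
      (𝓝[≠] ρ) (𝓝 κ') := by
    have := hasDerivAt_iff_tendsto_slope.mp hderiv
    simpa [slope_fun_def_field] using this
  have hinv : Tendsto (fun t => (t - ρ) / completedRiemannZeta t) (𝓝[≠] ρ) (𝓝 κ'⁻¹) := by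
    have := (hslope.inv₀ hκ'0)
    refine this.congr' ?_
    filter_upwards [self_mem_nhdsWithin] with t ht
    rw [hκρ, sub_zero, inv_div]
  have hmap : Tendsto (fun s : ℂ => -2 * s) (𝓝[≠] (-ρ / 2)) (𝓝[≠] ρ) := by
    rw [tendsto_nhdsWithin_iff]
    constructor
    · have : ContinuousAt (fun s : ℂ => -2 * s) (-ρ / 2) :=
        (continuous_const.mul continuous_id).continuousAt
      have h2 : (-2 : ℂ) * (-ρ / 2) = ρ := by ring
      simpa [h2] using this.tendsto.mono_left nhdsWithin_le_nhds
    · filter_upwards [self_mem_nhdsWithin] with s hs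
      simp only [Set.mem_compl_iff, Set.mem_singleton_iff] at hs ⊢
      intro h
      apply hs
      have : s = -2 * s / (-2) := by ring
      rw [this, h]; ring
  have hL1 : Tendsto (fun s : ℂ => (s + ρ / 2) / completedRiemannZeta (-2 * s))
      (𝓝[≠] (-ρ / 2)) (𝓝 (-(2 * κ')⁻¹)) := by
    have h1 : Tendsto (fun s : ℂ => (-2 * s - ρ) / completedRiemannZeta (-2 * s))
        (𝓝[≠] (-ρ / 2)) (𝓝 κ'⁻¹) := hinv.comp hmap
    have h2 := h1.const_mul (-(1 : ℂ) / 2)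
    have heq2 : (-(1 : ℂ) / 2) * κ'⁻¹ = -(2 * κ')⁻¹ := by
      rw [mul_inv]; ring
    rw [heq2] at h2
    refine h2.congr fun s => ?_
    rw [mul_div_assoc']
    congr 1
    ring
  -- continuity of the rest
  have hL2 : Tendsto (fun s : ℂ => (x : ℂ) ^ (-s) * (π : ℂ) ^ (s + 1) / Complex.sin ((π : ℂ) * s))
      (𝓝[≠] (-ρ / 2)) (𝓝 ((x : ℂ) ^ (ρ / 2) * (π : ℂ) ^ (1 - ρ / 2) /
        (-Complex.sin ((π : ℂ) * ρ / 2)))) := by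
    have hc : ContinuousAt (fun s : ℂ => (x : ℂ) ^ (-s) * (π : ℂ) ^ (s + 1) /
        Complex.sin ((π : ℂ) * s)) (-ρ / 2) := by
      apply ContinuousAt.div
      · exact ((continuous_neg.continuousAt).const_cpow (Or.inl hx0)).mul
          ((continuous_id.add continuous_const).continuousAt.const_cpow (Or.inl hπ0))
      · exact (Complex.continuous_sin.comp (continuous_const.mul continuous_id)).continuousAt
      · show Complex.sin ((π : ℂ) * (-ρ / 2)) ≠ 0
        have : (π : ℂ) * (-ρ / 2) = -((π : ℂ) * ρ / 2) := by ring
        rw [this, Complex.sin_neg]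
        exact neg_ne_zero.mpr hsin
    have := tendsto_nhdsWithin_of_tendsto_nhds (s := {(-ρ / 2 : ℂ)}ᶜ) hc.tendsto
    have h1 : -(-ρ / 2) = ρ / 2 := by ring
    have h2 : (-ρ / 2) + 1 = 1 - ρ / 2 := by ring
    have h3 : (π : ℂ) * (-ρ / 2) = -((π : ℂ) * ρ / 2) := by ring
    simpa [h1, h2, h3, Complex.sin_neg] using this
  -- combine
  have hprod := hL1.mul hL2
  have hval : (-(2 * κ')⁻¹) * ((x : ℂ) ^ (ρ / 2) * (π : ℂ) ^ (1 - ρ / 2) /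
      (-Complex.sin ((π : ℂ) * ρ / 2))) =
      (π : ℂ) / Complex.sin ((π : ℂ) * ρ / 2) / (2 * κ') * ((x : ℂ) / (π : ℂ)) ^ (ρ / 2) := by
    have hπ1 : (π : ℂ) ^ (1 - ρ / 2) = (π : ℂ) * ((π : ℂ) ^ (ρ / 2))⁻¹ := by
      rw [sub_eq_add_neg, cpow_add _ _ hπ0, cpow_one, cpow_neg]
    rw [hπρ, hπ1]
    field_simp
  constructor
  · rw [← hval]
    refine hprod.congr fun s => ?_
    rw [div_mul_div_comm, mul_div_assoc]
    congr 1
    ring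
  · -- residue identity
    have hGdef : Gammaℝ ρ = (π : ℂ) ^ (-ρ / 2) * Complex.Gamma (ρ / 2) := Gammaℝ_def ρ
    have hrefl : Complex.Gamma (ρ / 2) * Complex.Gamma (1 - ρ / 2) =
        (π : ℂ) / Complex.sin ((π : ℂ) * (ρ / 2)) := Complex.Gamma_mul_Gamma_one_sub (ρ / 2)
    have hGval : Gammaℝ ρ = ((π : ℂ) ^ (ρ / 2))⁻¹ * Complex.Gamma (ρ / 2) := by
      rw [hGdef, neg_div, cpow_neg]
    have hmm : (π : ℂ) * ρ / 2 = (π : ℂ) * (ρ / 2) := by ring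
    rw [hκ', hπρ, hGval, hmm, ← hrefl]
    field_simp
end
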